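/- Let m ≥ 1 and for each i ∈ Fin m let A_i ⊆ B_i be finite sets of blocks, where each block has a global timestamp (v, i) ∈ ℕ × Fin m, timestamps are pairwise distinct, every block in A_i has v < s1, and every block in (B_i \ A_i) has v ≥ s1. Let L1 be the elements of ⋃ A_i sorted by lexicographic timestamp, and L2 the elements of ⋃ B_i sorted the same way. Then L1 is a prefix of L2. -/

import Mathlib

lemma sort_prefix_of_lt {α : Type*} [LinearOrder α] [DecidableEq α] (s t : Finset α)
    (hst : s ⊆ t) (h : ∀ a ∈ s, ∀ b ∈ t \ s, a < b) :
    s.sort (· ≤ ·) <+: t.sort (· ≤ ·) := by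
  have hval : t.val = s.val + (t \ s).val := by
    rw [Finset.sdiff_val]
    exact (add_tsub_cancel_of_le (Finset.val_le_iff.2 hst)).symm
  have hperm : (t.sort (· ≤ ·)).Perm (s.sort (· ≤ ·) ++ (t \ s).sort (· ≤ ·)) := by
    have h1 : (t.sort (· ≤ ·)).Perm t.val.toList := Finset.sort_perm_toList _ _
    have h2 : (s.val + (t \ s).val).toList.Perm
        (s.val.toList ++ (t \ s).val.toList) := by
      rw [← Multiset.coe_eq_coe]
      simp [Multiset.coe_toList, ← Multiset.coe_add]
    have h3 := List.Perm.append (Finset.sort_perm_toList s (· ≤ ·)).symm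
      (Finset.sort_perm_toList (t \ s) (· ≤ ·)).symm
    rw [hval] at h1
    exact h1.trans (h2.trans h3)
  have key : t.sort (· ≤ ·) = s.sort (· ≤ ·) ++ (t \ s).sort (· ≤ ·) := by
    apply List.Perm.eq_of_pairwise' (r := (· ≤ ·)) (Finset.pairwise_sort _ _) ?_ hperm
    refine List.pairwise_append.2 ⟨Finset.pairwise_sort _ _, Finset.pairwise_sort _ _, ?_⟩
    intro a ha b hb
    exact (h a ((Finset.mem_sort _).1 ha) b ((Finset.mem_sort _).1 hb)).le
  rw [key]
  exact List.prefix_append _ _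

/-- Merging the per-chain confirmed prefixes by sorting on the lexicographic timestamp
`(clock, chain index)` yields globally confirmed sequences, and the earlier view's
sequence `L1` is a prefix of the later one's `L2`: with `A i ⊆ B i` finite sets of
blocks, injective timestamps, all blocks of the `A i` having clock `< s1` and all blocks
of `B i \ A i` having clock `≥ s1`. -/
theorem global_sequence_prefix {Block : Type*} [DecidableEq Block]
    (m : ℕ) (hm : 1 ≤ m) (v : Block → ℕ) (chain : Block → Fin m)
    (ts : Block → ℕ ×ₗ Fin m) (hts : ts = fun b => toLex (v b, chain b))
    (hinj : Function.Injective ts)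
    (A B : Fin m → Finset Block) (hAB : ∀ i, A i ⊆ B i)
    (s1 : ℕ)
    (hA : ∀ i, ∀ b ∈ A i, v b < s1)
    (hBA : ∀ i, ∀ b ∈ B i \ A i, s1 ≤ v b) :
    (((Finset.univ.biUnion A).image ts).sort (· ≤ ·)) <+:
      (((Finset.univ.biUnion B).image ts).sort (· ≤ ·)) := by
  apply sort_prefix_of_lt
  · apply Finset.image_subset_image
    intro x hx
    rw [Finset.mem_biUnion] at hx ⊢
    obtain ⟨i, _, hxi⟩ := hx
    exact ⟨i, Finset.mem_univ _, hAB i hxi⟩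
  · intro a ha b hb
    simp only [Finset.mem_image, Finset.mem_biUnion, Finset.mem_univ, true_and] at ha
    obtain ⟨x, ⟨i, hxi⟩, rfl⟩ := ha
    rw [Finset.mem_sdiff] at hb
    obtain ⟨hbB, hbnA⟩ := hb
    simp only [Finset.mem_image, Finset.mem_biUnion, Finset.mem_univ, true_and] at hbB
    obtain ⟨y, ⟨j, hyj⟩, rfl⟩ := hbB
    have hynA : y ∉ A j := by
      intro hy
      apply hbnA
      simp only [Finset.mem_image, Finset.mem_biUnion, Finset.mem_univ, true_and]
      exact ⟨y, ⟨j, hy⟩, rfl⟩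
    have h1 : v x < s1 := hA i x hxi
    have h2 : s1 ≤ v y := hBA j y (Finset.mem_sdiff.2 ⟨hyj, hynA⟩)
    rw [hts]
    exact Prod.Lex.lt_iff.2 (Or.inl (h1.trans_le h2))
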